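/- Let (ℒ, ℒ̄) be a Toda Lax pair in the standard gauge and φ : ℤ → ℂ such that the constraint of type B, (T − T†)ℒ̄ = ℒ†(T − T†), holds. Then for every integer k ≥ 1 one has both (T − T†)ℒ̄^k = (ℒ†)^k (T − T†) and (T − T†)ℒ^k = (ℒ̄†)^k (T − T†). -/
import Mathlib


/-- Pseudo-difference operators modeled as ℤ×ℤ matrices over ℂ. -/
abbrev PDO := ℤ → ℤ → ℂ

/-- Entrywise matrix product `(MN)(n,m) = Σ_k M(n,k) N(k,m)` (a `tsum`;
it reduces to a finite sum whenever the supports make it finitely supported). -/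
noncomputable def pmul (M N : PDO) : PDO := fun n m => ∑' k : ℤ, M n k * N k m

/-- The adjoint: `(M†)(n,m) = M(m,n)`. -/
def padj (M : PDO) : PDO := fun n m => M m n

/-- Matrix powers, with `ppow M 0` the identity matrix. -/
noncomputable def ppow (M : PDO) : ℕ → PDO
  | 0 => fun n m => if n = m then 1 else 0
  | k + 1 => pmul (ppow M k) M

/-- `(M)_{>0}`: the strictly upper-triangular (positive-diagonal) part. -/
def pplus (M : PDO) : PDO := fun n m => if n < m then M n m else 0

/-- `(M)_{<0}`: the strictly lower-triangular (negative-diagonal) part. -/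
def pminus (M : PDO) : PDO := fun n m => if m < n then M n m else 0

/-- `(M)_0`: the diagonal part. -/
def pzero (M : PDO) : PDO := fun n m => if n = m then M n m else 0

/-- `(M)_j`: the j-th diagonal part, with `(n, n+j)` entry `M(n, n+j)`. -/
def pdiag (j : ℤ) (M : PDO) : PDO := fun n m => if m = n + j then M n m else 0

/-- The shift matrix Λ: entries 1 iff `m = n+1`. -/
def shiftΛ : PDO := fun n m => if m = n + 1 then 1 else 0

/-- The inverse shift matrix Λ⁻¹ (transpose of Λ): entries 1 iff `m = n-1`. -/
def shiftΛinv : PDO := fun n m => if m = n - 1 then 1 else 0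

/-- Matrix `T` with entries `T(n,m) = e^{-φ(n)}` if `m = n+1`, else 0. -/
noncomputable def Tmat (φ : ℤ → ℂ) : PDO :=
  fun n m => if m = n + 1 then Complex.exp (-(φ n)) else 0

/-- A Toda Lax pair in the standard gauge: `L` is of lower type with
`L(n,m) = 0` for `m > n+1` and `L(n,n+1) = 1`; `L̄` is of upper type with
`L̄(n,m) = 0` for `m < n-1`. -/
def IsStandardPair (L Lb : PDO) : Prop :=
  (∀ n m : ℤ, n + 1 < m → L n m = 0) ∧ (∀ n : ℤ, L n (n + 1) = 1) ∧
  (∀ n m : ℤ, m < n - 1 → Lb n m = 0)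

/-- `B_k = (L^k)_{>0}`. -/
noncomputable def Bop (L : PDO) (k : ℕ) : PDO := pplus (ppow L k)

/-- `Φ_k = (L^k)_0`. -/
noncomputable def Phiop (L : PDO) (k : ℕ) : PDO := pzero (ppow L k)

/-- `B̄_k = (L̄^k)_{<0}`. -/
noncomputable def Bbarop (Lb : PDO) (k : ℕ) : PDO := pminus (ppow Lb k)

noncomputable def Pid : PDO := fun n m => if n = m then 1 else 0

lemma ppow_zero (M : PDO) : ppow M 0 = Pid := rfl
lemma ppow_succ (M : PDO) (k : ℕ) : ppow M (k+1) = pmul (ppow M k) M := rfl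

lemma pmul_id_right (A : PDO) : pmul A Pid = A := by
  funext n m
  exact (tsum_eq_single m fun k hk => by simp [Pid, hk]).trans (by simp [Pid])

lemma pmul_id_left (A : PDO) : pmul Pid A = A := by
  funext n m
  exact (tsum_eq_single n fun k hk => by simp [Pid, Ne.symm hk]).trans (by simp [Pid])

lemma padj_pmul (A B : PDO) : padj (pmul A B) = pmul (padj B) (padj A) := by
  funext n m; exact tsum_congr fun k => mul_comm _ _

lemma padj_padj (A : PDO) : padj (padj A) = A := rfl

lemma pmul_neg_left (A B : PDO) : pmul (-A) B = -(pmul A B) := by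
  funext n m
  show (∑' k : ℤ, (-A) n k * B k m) = -(∑' k : ℤ, A n k * B k m)
  rw [← tsum_neg]
  exact tsum_congr fun k => by simp

lemma pmul_neg_right (A B : PDO) : pmul A (-B) = -(pmul A B) := by
  funext n m
  show (∑' k : ℤ, A n k * (-B) k m) = -(∑' k : ℤ, A n k * B k m)
  rw [← tsum_neg]
  exact tsum_congr fun k => by simp

def UpperN (N : ℤ) (A : PDO) : Prop := ∀ n m : ℤ, m < n - N → A n m = 0
def LowerN (N : ℤ) (A : PDO) : Prop := ∀ n m : ℤ, n + N < m → A n m = 0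

lemma up_pmul {N M : ℤ} {A B : PDO} (hA : UpperN N A) (hB : UpperN M B) :
    UpperN (N + M) (pmul A B) := by
  intro n m h
  have hz : ∀ k : ℤ, A n k * B k m = 0 := by
    intro k
    by_cases hk : A n k = 0
    · rw [hk, zero_mul]
    · have : n - N ≤ k := by by_contra hc; exact hk (hA n k (by omega))
      rw [hB k m (by omega), mul_zero]
  exact (tsum_congr hz).trans tsum_zero

lemma low_pmul {N M : ℤ} {A B : PDO} (hA : LowerN N A) (hB : LowerN M B) :
    LowerN (N + M) (pmul A B) := by
  intro n m h
  have hz : ∀ k : ℤ, A n k * B k m = 0 := by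
    intro k
    by_cases hk : A n k = 0
    · rw [hk, zero_mul]
    · have : k ≤ n + N := by by_contra hc; exact hk (hA n k (by omega))
      rw [hB k m (by omega), mul_zero]
  exact (tsum_congr hz).trans tsum_zero

lemma up_ppow {A : PDO} (hA : UpperN 1 A) : ∀ k : ℕ, UpperN (k : ℤ) (ppow A k) := by
  intro k
  induction k with
  | zero =>
    intro n m h
    show (if n = m then (1:ℂ) else 0) = 0
    rw [if_neg (by omega)]
  | succ k ih =>
    intro n m h
    exact up_pmul ih hA n m (by push_cast at h ⊢; omega)

lemma low_ppow {A : PDO} (hA : LowerN 1 A) : ∀ k : ℕ, LowerN (k : ℤ) (ppow A k) := by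
  intro k
  induction k with
  | zero =>
    intro n m h
    show (if n = m then (1:ℂ) else 0) = 0
    rw [if_neg (by omega)]
  | succ k ih =>
    intro n m h
    exact low_pmul ih hA n m (by push_cast at h ⊢; omega)

lemma pmul_assoc_of_finite (A B C : PDO)
    (h : ∀ n m : ℤ, {p : ℤ × ℤ | A n p.1 * B p.1 p.2 * C p.2 m ≠ 0}.Finite) :
    pmul (pmul A B) C = pmul A (pmul B C) := by
  funext n m
  have hfin := h n m
  set s : Finset (ℤ × ℤ) := hfin.toFinset with hs
  set s1 : Finset ℤ := s.image Prod.fst with hs1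
  set s2 : Finset ℤ := s.image Prod.snd with hs2
  have hmem : ∀ k j : ℤ, A n k * B k j * C j m ≠ 0 → k ∈ s1 ∧ j ∈ s2 := by
    intro k j hkj
    have hkj' : (k, j) ∈ s := by rw [hs]; exact (Set.Finite.mem_toFinset _).mpr hkj
    exact ⟨Finset.mem_image.mpr ⟨(k,j), hkj', rfl⟩, Finset.mem_image.mpr ⟨(k,j), hkj', rfl⟩⟩
  have hLeq : pmul (pmul A B) C n m = ∑ j ∈ s2, ∑ k ∈ s1, A n k * B k j * C j m := by
    show (∑' j : ℤ, (∑' k : ℤ, A n k * B k j) * C j m) = _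
    have hg : ∀ j : ℤ, (∑' k : ℤ, A n k * B k j) * C j m
        = ∑ k ∈ s1, A n k * B k j * C j m := by
      intro j
      by_cases hc : C j m = 0
      · simp [hc]
      · have ht : (∑' k : ℤ, A n k * B k j) = ∑ k ∈ s1, A n k * B k j := by
          apply tsum_eq_sum
          intro k hk
          by_contra hne
          exact hk (hmem k j (mul_ne_zero hne hc)).1
        rw [ht, Finset.sum_mul]
    rw [tsum_congr hg]
    apply tsum_eq_sum
    intro j hj
    apply Finset.sum_eq_zero
    intro k _
    by_contra hne
    exact hj (hmem k j hne).2
  have hReq : pmul A (pmul B C) n m = ∑ k ∈ s1, ∑ j ∈ s2, A n k * (B k j * C j m) := by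
    show (∑' k : ℤ, A n k * (∑' j : ℤ, B k j * C j m)) = _
    have hg : ∀ k : ℤ, A n k * (∑' j : ℤ, B k j * C j m)
        = ∑ j ∈ s2, A n k * (B k j * C j m) := by
      intro k
      by_cases ha : A n k = 0
      · simp [ha]
      · have ht : (∑' j : ℤ, B k j * C j m) = ∑ j ∈ s2, B k j * C j m := by
          apply tsum_eq_sum
          intro j hj
          by_contra hne
          refine hj (hmem k j ?_).2
          rw [mul_assoc]; exact mul_ne_zero ha hne
        rw [ht, Finset.mul_sum]
    rw [tsum_congr hg]
    apply tsum_eq_sum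
    intro k hk
    apply Finset.sum_eq_zero
    intro j _
    by_contra hne
    rw [← mul_assoc] at hne
    exact hk (hmem k j hne).1
  rw [hLeq, hReq, Finset.sum_comm]
  exact Finset.sum_congr rfl fun k _ => Finset.sum_congr rfl fun j _ => mul_assoc _ _ _

lemma pmul_assoc_of_bounds (A B C : PDO) (a b c d : ℤ → ℤ → ℤ)
    (h : ∀ n m k j : ℤ, A n k ≠ 0 → B k j ≠ 0 → C j m ≠ 0 →
      a n m ≤ k ∧ k ≤ b n m ∧ c n m ≤ j ∧ j ≤ d n m) :
    pmul (pmul A B) C = pmul A (pmul B C) := by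
  apply pmul_assoc_of_finite
  intro n m
  apply Set.Finite.subset ((Set.finite_Icc (a n m) (b n m)).prod (Set.finite_Icc (c n m) (d n m)))
  rintro ⟨k, j⟩ hp
  simp only [Set.mem_setOf_eq] at hp
  have h1 : A n k ≠ 0 := fun h0 => hp (by rw [h0, zero_mul, zero_mul])
  have h2 : B k j ≠ 0 := fun h0 => hp (by rw [h0, mul_zero, zero_mul])
  have h3 : C j m ≠ 0 := fun h0 => hp (by rw [h0, mul_zero])
  obtain ⟨hk1, hk2, hj1, hj2⟩ := h n m k j h1 h2 h3
  exact Set.mem_prod.mpr ⟨Set.mem_Icc.mpr ⟨hk1, hk2⟩, Set.mem_Icc.mpr ⟨hj1, hj2⟩⟩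

lemma assoc_DUU {A B C : PDO} {N M : ℤ}
    (hA : ∀ n m, A n m ≠ 0 → n - 1 ≤ m ∧ m ≤ n + 1)
    (hB : UpperN N B) (hC : UpperN M C) :
    pmul (pmul A B) C = pmul A (pmul B C) := by
  apply pmul_assoc_of_bounds A B C (fun n _ => n - 1) (fun n _ => n + 1)
    (fun n _ => n - 1 - N) (fun _ m => m + M)
  intro n m k j h1 h2 h3
  obtain ⟨hk1, hk2⟩ := hA n k h1
  have hj1 : k - N ≤ j := by by_contra h0; exact h2 (hB k j (by omega))
  have hj2 : j ≤ m + M := by by_contra h0; exact h3 (hC j m (by omega))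
  omega

lemma assoc_UDU {A B C : PDO} {N M : ℤ}
    (hA : UpperN N A)
    (hB : ∀ n m, B n m ≠ 0 → n - 1 ≤ m ∧ m ≤ n + 1)
    (hC : UpperN M C) :
    pmul (pmul A B) C = pmul A (pmul B C) := by
  apply pmul_assoc_of_bounds A B C (fun n _ => n - N) (fun _ m => m + M + 1)
    (fun n _ => n - N - 1) (fun _ m => m + M)
  intro n m k j h1 h2 h3
  have hk1 : n - N ≤ k := by by_contra h0; exact h1 (hA n k (by omega))
  obtain ⟨hj1, hj2⟩ := hB k j h2
  have hj3 : j ≤ m + M := by by_contra h0; exact h3 (hC j m (by omega))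
  omega

lemma assoc_UUD {A B C : PDO} {N M : ℤ}
    (hA : UpperN N A) (hB : UpperN M B)
    (hC : ∀ n m, C n m ≠ 0 → n - 1 ≤ m ∧ m ≤ n + 1) :
    pmul (pmul A B) C = pmul A (pmul B C) := by
  apply pmul_assoc_of_bounds A B C (fun n _ => n - N) (fun _ m => m + 1 + M)
    (fun _ m => m - 1) (fun _ m => m + 1)
  intro n m k j h1 h2 h3
  have hk1 : n - N ≤ k := by by_contra h0; exact h1 (hA n k (by omega))
  have hj1 : k - M ≤ j := by by_contra h0; exact h2 (hB k j (by omega))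
  obtain ⟨hj2, hj3⟩ := hC j m h3
  omega

lemma assoc_DLL {A B C : PDO} {N M : ℤ}
    (hA : ∀ n m, A n m ≠ 0 → n - 1 ≤ m ∧ m ≤ n + 1)
    (hB : LowerN N B) (hC : LowerN M C) :
    pmul (pmul A B) C = pmul A (pmul B C) := by
  apply pmul_assoc_of_bounds A B C (fun n _ => n - 1) (fun n _ => n + 1)
    (fun _ m => m - M) (fun n _ => n + 1 + N)
  intro n m k j h1 h2 h3
  obtain ⟨hk1, hk2⟩ := hA n k h1
  have hj1 : j ≤ k + N := by by_contra h0; exact h2 (hB k j (by omega))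
  have hj2 : m - M ≤ j := by by_contra h0; exact h3 (hC j m (by omega))
  omega

lemma assoc_LDL {A B C : PDO} {N M : ℤ}
    (hA : LowerN N A)
    (hB : ∀ n m, B n m ≠ 0 → n - 1 ≤ m ∧ m ≤ n + 1)
    (hC : LowerN M C) :
    pmul (pmul A B) C = pmul A (pmul B C) := by
  apply pmul_assoc_of_bounds A B C (fun _ m => m - M - 1) (fun n _ => n + N)
    (fun _ m => m - M) (fun n _ => n + N + 1)
  intro n m k j h1 h2 h3
  have hk1 : k ≤ n + N := by by_contra h0; exact h1 (hA n k (by omega))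
  obtain ⟨hj1, hj2⟩ := hB k j h2
  have hj3 : m - M ≤ j := by by_contra h0; exact h3 (hC j m (by omega))
  omega

lemma assoc_LLD {A B C : PDO} {N M : ℤ}
    (hA : LowerN N A) (hB : LowerN M B)
    (hC : ∀ n m, C n m ≠ 0 → n - 1 ≤ m ∧ m ≤ n + 1) :
    pmul (pmul A B) C = pmul A (pmul B C) := by
  apply pmul_assoc_of_bounds A B C (fun _ m => m - 1 - M) (fun n _ => n + N)
    (fun _ m => m - 1) (fun _ m => m + 1)
  intro n m k j h1 h2 h3
  have hk1 : k ≤ n + N := by by_contra h0; exact h1 (hA n k (by omega))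
  have hj1 : j ≤ k + M := by by_contra h0; exact h2 (hB k j (by omega))
  obtain ⟨hj2, hj3⟩ := hC j m h3
  omega

lemma Dband (φ : ℤ → ℂ) :
    ∀ n m : ℤ, (Tmat φ - padj (Tmat φ)) n m ≠ 0 → n - 1 ≤ m ∧ m ≤ n + 1 := by
  intro n m h
  by_contra hc
  apply h
  show Tmat φ n m - Tmat φ m n = 0
  simp only [Tmat]
  rw [if_neg (by omega), if_neg (by omega), sub_zero]

lemma Dadj (φ : ℤ → ℂ) :
    padj (Tmat φ - padj (Tmat φ)) = -(Tmat φ - padj (Tmat φ)) := by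
  funext n m
  show Tmat φ m n - Tmat φ n m = -(Tmat φ n m - Tmat φ m n)
  ring

/-- the constraint of type B propagates to all powers of the
Lax operators. -/
theorem typeB_constraint_powers
    (L Lb : PDO) (φ : ℤ → ℂ)
    (hpair : IsStandardPair L Lb)
    (hconstr : pmul (Tmat φ - padj (Tmat φ)) Lb
      = pmul (padj L) (Tmat φ - padj (Tmat φ))) :
    ∀ k : ℕ, 1 ≤ k →
      pmul (Tmat φ - padj (Tmat φ)) (ppow Lb k)
        = pmul (ppow (padj L) k) (Tmat φ - padj (Tmat φ))
      ∧ pmul (Tmat φ - padj (Tmat φ)) (ppow L k)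
        = pmul (ppow (padj Lb) k) (Tmat φ - padj (Tmat φ)) := by
  obtain ⟨hL0, hL1, hLb0⟩ := hpair
  set D : PDO := Tmat φ - padj (Tmat φ) with hDdef
  have hDb : ∀ n m : ℤ, D n m ≠ 0 → n - 1 ≤ m ∧ m ≤ n + 1 := by
    rw [hDdef]; exact Dband φ
  have hDadj : padj D = -D := by rw [hDdef]; exact Dadj φ
  have hLlow : LowerN 1 L := fun n m hnm => hL0 n m (by omega)
  have hLbup : UpperN 1 Lb := fun n m hnm => hLb0 n m (by omega)
  have hLaup : UpperN 1 (padj L) := fun n m hnm => hL0 m n (by omega)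
  have hLbalow : LowerN 1 (padj Lb) := fun n m hnm => hLb0 m n (by omega)
  have hconstr2 : pmul D L = pmul (padj Lb) D := by
    have h := congrArg padj hconstr
    rw [padj_pmul, padj_pmul, padj_padj, hDadj, pmul_neg_right, pmul_neg_left] at h
    exact (neg_inj.mp h).symm
  suffices H : ∀ k : ℕ, pmul D (ppow Lb k) = pmul (ppow (padj L) k) D
      ∧ pmul D (ppow L k) = pmul (ppow (padj Lb) k) D by
    intro k _; exact H k
  intro k
  induction k with
  | zero =>
    constructor
    · show pmul D Pid = pmul Pid D
      rw [pmul_id_left, pmul_id_right]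
    · show pmul D Pid = pmul Pid D
      rw [pmul_id_left, pmul_id_right]
  | succ n ih =>
    constructor
    · calc pmul D (ppow Lb (n+1)) = pmul D (pmul (ppow Lb n) Lb) := rfl
        _ = pmul (pmul D (ppow Lb n)) Lb := (assoc_DUU hDb (up_ppow hLbup n) hLbup).symm
        _ = pmul (pmul (ppow (padj L) n) D) Lb := by rw [ih.1]
        _ = pmul (ppow (padj L) n) (pmul D Lb) := assoc_UDU (up_ppow hLaup n) hDb hLbup
        _ = pmul (ppow (padj L) n) (pmul (padj L) D) := by rw [hconstr]
        _ = pmul (pmul (ppow (padj L) n) (padj L)) D :=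
            (assoc_UUD (up_ppow hLaup n) hLaup hDb).symm
        _ = pmul (ppow (padj L) (n+1)) D := rfl
    · calc pmul D (ppow L (n+1)) = pmul D (pmul (ppow L n) L) := rfl
        _ = pmul (pmul D (ppow L n)) L := (assoc_DLL hDb (low_ppow hLlow n) hLlow).symm
        _ = pmul (pmul (ppow (padj Lb) n) D) L := by rw [ih.2]
        _ = pmul (ppow (padj Lb) n) (pmul D L) := assoc_LDL (low_ppow hLbalow n) hDb hLlow
        _ = pmul (ppow (padj Lb) n) (pmul (padj Lb) D) := by rw [hconstr2]
        _ = pmul (pmul (ppow (padj Lb) n) (padj Lb)) D :=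
            (assoc_LLD (low_ppow hLbalow n) hLbalow hDb).symm
        _ = pmul (ppow (padj Lb) (n+1)) D := rfl
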